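/- Suppose for some k ≥ 0 and l ≥ 1 that c^{2kl} ≥ (1-α)^l · n^l, and suppose there exists a transcript T with positive probability such that, under the uniform distribution U over [n]^l, some sequence Q has Pr[U = Q | RAM(U) = T] ≥ 1/n^l, and ε-DP implies Pr[U = Q' | RAM(U) = T] ≥ e^{-lε} · (1-α)^l / c^{2kl} for all Q' ≠ Q. Then 1 ≥ e^{-lε} · (n^l - 1) · (1-α)^l / c^{2kl}, hence k ≥ (1/(2 log c)) · (log(n(1-α)) - ε - (1/l)·log 2) whenever n^l ≥ 2. -/

import Mathlib

/-- The counting inequality at the heart of the DP-RAM lower bound. -/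
theorem stmt5 (n c : ℝ) (hn : 2 ≤ n) (hc : 2 ≤ c)
    (ε α k : ℝ) (hε : 0 ≤ ε) (hα0 : 0 ≤ α) (hα1 : α < 1) (hk : 0 ≤ k)
    (l : ℕ) (hl : 1 ≤ l)
    (Seq : Type*) [Fintype Seq] (hcard : (Fintype.card Seq : ℝ) = n ^ l)
    (P : Seq → ℝ) (hP0 : ∀ Q, 0 ≤ P Q) (hP1 : ∑ Q, P Q ≤ 1)
    (hcount : c ^ (2 * k * (l : ℝ)) ≥ (1 - α) ^ l * n ^ l)
    (Q : Seq) (hQ : P Q ≥ 1 / n ^ l)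
    (hDPlb : ∀ Q' : Seq, Q' ≠ Q →
      P Q' ≥ Real.exp (-((l : ℝ) * ε)) * (1 - α) ^ l / c ^ (2 * k * (l : ℝ))) :
    1 ≥ Real.exp (-((l : ℝ) * ε)) * (n ^ l - 1) * (1 - α) ^ l / c ^ (2 * k * (l : ℝ)) ∧
      ((2 : ℝ) ≤ n ^ l →
        k ≥ (1 / (2 * Real.log c)) *
          (Real.log (n * (1 - α)) - ε - (1 / (l : ℝ)) * Real.log 2)) := by
  classical
  have hc0 : (0 : ℝ) < c := by linarith
  have h1α : (0 : ℝ) < 1 - α := by linarith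
  have hn0 : (0 : ℝ) < n := by linarith
  have hcpow : (0 : ℝ) < c ^ (2 * k * (l : ℝ)) := Real.rpow_pos_of_pos hc0 _
  set B : ℝ := Real.exp (-((l : ℝ) * ε)) * (1 - α) ^ l / c ^ (2 * k * (l : ℝ)) with hB
  have hB0 : 0 ≤ B := by
    apply div_nonneg _ hcpow.le
    exact mul_nonneg (Real.exp_pos _).le (pow_nonneg h1α.le l)
  constructor
  · -- counting part
    have hsub : ∑ Q' ∈ Finset.univ.erase Q, P Q' ≤ 1 := by
      refine le_trans (Finset.sum_le_sum_of_subset_of_nonneg (Finset.subset_univ _)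
        (fun i _ _ => hP0 i)) hP1
    have hlb : ((Finset.univ.erase Q).card : ℝ) * B ≤ ∑ Q' ∈ Finset.univ.erase Q, P Q' := by
      have := Finset.card_nsmul_le_sum (Finset.univ.erase Q) P B
        (fun i hi => hDPlb i (Finset.ne_of_mem_erase hi))
      simpa [nsmul_eq_mul] using this
    have hcard1 : (1 : ℕ) ≤ Fintype.card Seq := Fintype.card_pos_iff.mpr ⟨Q⟩
    have hce : ((Finset.univ.erase Q).card : ℝ) = n ^ l - 1 := by
      rw [Finset.card_erase_of_mem (Finset.mem_univ Q)]
      rw [Finset.card_univ, Nat.cast_sub hcard1, hcard]; norm_num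
    rw [hce] at hlb
    have : (n ^ l - 1) * B ≤ 1 := le_trans hlb hsub
    calc Real.exp (-((l : ℝ) * ε)) * (n ^ l - 1) * (1 - α) ^ l / c ^ (2 * k * (l : ℝ))
        = (n ^ l - 1) * B := by rw [hB]; ring
      _ ≤ 1 := this
  · intro _
    have hlogc : 0 < Real.log c := Real.log_pos (by linarith)
    have hl0 : (0 : ℝ) < l := by exact_mod_cast hl
    have hlog : Real.log ((1 - α) ^ l * n ^ l) ≤ Real.log (c ^ (2 * k * (l : ℝ))) :=
      Real.log_le_log (by positivity) hcount
    rw [Real.log_rpow hc0, Real.log_mul (by positivity) (by positivity),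
      Real.log_pow, Real.log_pow] at hlog
    have hmain : Real.log (n * (1 - α)) ≤ 2 * k * Real.log c := by
      rw [Real.log_mul (by positivity) (by positivity)]
      have : (l : ℝ) * (Real.log n + Real.log (1 - α)) ≤ (l : ℝ) * (2 * k * Real.log c) := by
        nlinarith [hlog]
      have := le_of_mul_le_mul_left this hl0
      linarith
    have hk' : Real.log (n * (1 - α)) / (2 * Real.log c) ≤ k := by
      rw [div_le_iff₀ (by positivity)]
      linarith [hmain]
    have hnonneg : 0 ≤ ε + (1 / (l : ℝ)) * Real.log 2 := by
      have : 0 ≤ Real.log 2 := Real.log_nonneg (by norm_num)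
      positivity
    have : (1 / (2 * Real.log c)) * (Real.log (n * (1 - α)) - ε - (1 / (l : ℝ)) * Real.log 2)
        ≤ (1 / (2 * Real.log c)) * Real.log (n * (1 - α)) := by
      apply mul_le_mul_of_nonneg_left _ (by positivity)
      linarith
    have heq : (1 / (2 * Real.log c)) * Real.log (n * (1 - α))
        = Real.log (n * (1 - α)) / (2 * Real.log c) := by ring
    linarith [heq ▸ this]
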